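/- Let a ∈ ℝ^12 be the coefficient vector of a quadratic system with (p2, q2) ≠ (0, 0). Then the greatest common divisor of p2 and q2 in ℂ[x,y] is the square (b·x + c·y)² of a single linear form if and only if μ0(a) = 0, K(a,x,y) is identically zero, and H(a,x,y) is identically zero. -/
import Mathlib


open MvPolynomial Finset

noncomputable section

namespace QSinf

/-!  Coefficient conventions: for `a : Fin 12 → ℝ`,
`a 0 = a00, a 1 = a10, a 2 = a01, a 3 = a20, a 4 = a11, a 5 = a02,
 a 6 = b00, a 7 = b10, a 8 = b01, a 9 = b20, a 10 = b11, a 11 = b02`,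
so that `p = a00 + a10*x + a01*y + a20*x^2 + 2*a11*x*y + a02*y^2` and
`q = b00 + b10*x + b01*y + b20*x^2 + 2*b11*x*y + b02*y^2`. -/

/-- linear part of `p` -/
def p1f (a : Fin 12 → ℝ) (x y : ℝ) : ℝ := a 1 * x + a 2 * y
/-- linear part of `q` -/
def q1f (a : Fin 12 → ℝ) (x y : ℝ) : ℝ := a 7 * x + a 8 * y
/-- quadratic part of `p` -/
def p2f (a : Fin 12 → ℝ) (x y : ℝ) : ℝ := a 3 * x ^ 2 + 2 * a 4 * x * y + a 5 * y ^ 2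
/-- quadratic part of `q` -/
def q2f (a : Fin 12 → ℝ) (x y : ℝ) : ℝ := a 9 * x ^ 2 + 2 * a 10 * x * y + a 11 * y ^ 2
/-- the polynomial `p` -/
def pf (a : Fin 12 → ℝ) (x y : ℝ) : ℝ := a 0 + p1f a x y + p2f a x y
/-- the polynomial `q` -/
def qf (a : Fin 12 → ℝ) (x y : ℝ) : ℝ := a 6 + q1f a x y + q2f a x y

/-- the invariant μ₀ -/
def mu0f (a : Fin 12 → ℝ) : ℝ :=
  (a 3 * a 11 - a 5 * a 9) ^ 2 - 4 * (a 3 * a 10 - a 4 * a 9) * (a 4 * a 11 - a 5 * a 10)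

/-- the comitant `K`, the Jacobian of `(p₂, q₂)` -/
def Kf (a : Fin 12 → ℝ) (x y : ℝ) : ℝ :=
  (2 * a 3 * x + 2 * a 4 * y) * (2 * a 10 * x + 2 * a 11 * y)
    - (2 * a 4 * x + 2 * a 5 * y) * (2 * a 9 * x + 2 * a 10 * y)

/-- the comitant `H`: minus the discriminant (in `x²,xy,y²`-coefficients) of
`α·p₂ + β·q₂` evaluated at `α = y`, `β = -x` -/
def Hf (a : Fin 12 → ℝ) (x y : ℝ) : ℝ :=
  -((2 * (a 4 * y - a 10 * x)) ^ 2 - 4 * (a 3 * y - a 9 * x) * (a 5 * y - a 11 * x))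

/-- the comitant `C₂ = y·p₂ - x·q₂` -/
def C2f (a : Fin 12 → ℝ) (x y : ℝ) : ℝ := y * p2f a x y - x * q2f a x y

/-- coefficient of `x³` in `C₂` -/
def cc0 (a : Fin 12 → ℝ) : ℝ := -(a 9)
/-- coefficient of `x²y` in `C₂` -/
def cc1 (a : Fin 12 → ℝ) : ℝ := a 3 - 2 * a 10
/-- coefficient of `xy²` in `C₂` -/
def cc2 (a : Fin 12 → ℝ) : ℝ := 2 * a 4 - a 11
/-- coefficient of `y³` in `C₂` -/
def cc3 (a : Fin 12 → ℝ) : ℝ := a 5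

/-- the invariant η, the discriminant of the binary cubic `C₂` -/
def etaf (a : Fin 12 → ℝ) : ℝ :=
  (cc1 a) ^ 2 * (cc2 a) ^ 2 - 4 * cc0 a * (cc2 a) ^ 3 - 4 * (cc1 a) ^ 3 * cc3 a
    + 18 * cc0 a * cc1 a * cc2 a * cc3 a - 27 * (cc0 a) ^ 2 * (cc3 a) ^ 2

/-- the comitant `M`, twice the Hessian of `C₂` -/
def Mf (a : Fin 12 → ℝ) (x y : ℝ) : ℝ :=
  2 * ((6 * cc0 a * x + 2 * cc1 a * y) * (2 * cc2 a * x + 6 * cc3 a * y)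
    - (2 * cc1 a * x + 2 * cc2 a * y) ^ 2)

/-- the comitant `L = 2K - 4H - M` -/
def Lf (a : Fin 12 → ℝ) (x y : ℝ) : ℝ := 2 * Kf a x y - 4 * Hf a x y - Mf a x y
/-- the comitant `N = K + H` -/
def Nf (a : Fin 12 → ℝ) (x y : ℝ) : ℝ := Kf a x y + Hf a x y
/-- the comitant `R = L + 8K` -/
def Rf (a : Fin 12 → ℝ) (x y : ℝ) : ℝ := Lf a x y + 8 * Kf a x y
/-- the comitant `K₁ = p₁q₂ - p₂q₁` -/
def K1f (a : Fin 12 → ℝ) (x y : ℝ) : ℝ := p1f a x y * q2f a x y - p2f a x y * q1f a x y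

/-- `p₂` as a polynomial in `ℂ[x,y]` -/
def p2C (a : Fin 12 → ℝ) : MvPolynomial (Fin 2) ℂ :=
  C (a 3 : ℂ) * X 0 ^ 2 + C (2 * a 4 : ℂ) * X 0 * X 1 + C (a 5 : ℂ) * X 1 ^ 2
/-- `q₂` as a polynomial in `ℂ[x,y]` -/
def q2C (a : Fin 12 → ℝ) : MvPolynomial (Fin 2) ℂ :=
  C (a 9 : ℂ) * X 0 ^ 2 + C (2 * a 10 : ℂ) * X 0 * X 1 + C (a 11 : ℂ) * X 1 ^ 2

/-- `d` is a greatest common divisor of `p` and `q` -/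
def IsGcdOf (d p q : MvPolynomial (Fin 2) ℂ) : Prop :=
  d ∣ p ∧ d ∣ q ∧ ∀ e : MvPolynomial (Fin 2) ℂ, e ∣ p → e ∣ q → e ∣ d

/-- the cubic form `C₂` regarded over `ℂ` -/
def C2c (a : Fin 12 → ℝ) (x y : ℂ) : ℂ :=
  (cc0 a : ℂ) * x ^ 3 + (cc1 a : ℂ) * x ^ 2 * y + (cc2 a : ℂ) * x * y ^ 2 + (cc3 a : ℂ) * y ^ 3

/-- the complex linear form `b·x + c·y` is proportional to a real linear form -/
def RealProp (b c : ℂ) : Prop := ∃ (l : ℂ) (r s : ℝ), l ≠ 0 ∧ b = l * (r : ℂ) ∧ c = l * (s : ℂ)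

/-- coefficient vector of the translated system `p(x+α, y+β), q(x+α, y+β)` -/
def rT (a : Fin 12 → ℝ) (α β : ℝ) : Fin 12 → ℝ :=
  ![a 0 + a 1 * α + a 2 * β + a 3 * α ^ 2 + 2 * a 4 * α * β + a 5 * β ^ 2,
    a 1 + 2 * a 3 * α + 2 * a 4 * β,
    a 2 + 2 * a 4 * α + 2 * a 5 * β,
    a 3, a 4, a 5,
    a 6 + a 7 * α + a 8 * β + a 9 * α ^ 2 + 2 * a 10 * α * β + a 11 * β ^ 2,
    a 7 + 2 * a 9 * α + 2 * a 10 * β,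
    a 8 + 2 * a 10 * α + 2 * a 11 * β,
    a 9, a 10, a 11]

/-- binary forms in `x = X 0`, `y = X 1` with real coefficients -/
abbrev R2 := MvPolynomial (Fin 2) ℝ

/-- ∂/∂x -/
def pdx (f : R2) : R2 := pderiv 0 f
/-- ∂/∂y -/
def pdy (f : R2) : R2 := pderiv 1 f
/-- the Jacobian of two binary forms -/
def jacobP (f g : R2) : R2 := pdx f * pdy g - pdy f * pdx g
/-- the second transvectant `(f,g)⁽²⁾` -/
def transv2 (f g : R2) : R2 :=
  pdx (pdx f) * pdy (pdy g) - 2 * pdx (pdy f) * pdx (pdy g) + pdy (pdy f) * pdx (pdx g)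

/-- `p₁` as a binary form -/
def p1P (a : Fin 12 → ℝ) : R2 := C (a 1) * X 0 + C (a 2) * X 1
/-- `q₁` as a binary form -/
def q1P (a : Fin 12 → ℝ) : R2 := C (a 7) * X 0 + C (a 8) * X 1
/-- `p₂` as a binary form -/
def p2P (a : Fin 12 → ℝ) : R2 := C (a 3) * X 0 ^ 2 + C (2 * a 4) * X 0 * X 1 + C (a 5) * X 1 ^ 2
/-- `q₂` as a binary form -/
def q2P (a : Fin 12 → ℝ) : R2 := C (a 9) * X 0 ^ 2 + C (2 * a 10) * X 0 * X 1 + C (a 11) * X 1 ^ 2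
/-- `C₀ = y·p₀ - x·q₀` -/
def C0P (a : Fin 12 → ℝ) : R2 := C (a 0) * X 1 - C (a 6) * X 0
/-- `C₁ = y·p₁ - x·q₁` -/
def C1P (a : Fin 12 → ℝ) : R2 := X 1 * p1P a - X 0 * q1P a
/-- `C₂ = y·p₂ - x·q₂` -/
def C2P (a : Fin 12 → ℝ) : R2 := X 1 * p2P a - X 0 * q2P a
/-- the comitant `K` as a binary form -/
def KP (a : Fin 12 → ℝ) : R2 := jacobP (p2P a) (q2P a)
/-- the comitant `M` (twice the Hessian of `C₂`) as a binary form -/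
def MP (a : Fin 12 → ℝ) : R2 :=
  2 * (pdx (pdx (C2P a)) * pdy (pdy (C2P a)) - (pdx (pdy (C2P a))) ^ 2)
/-- the comitant `H` as a binary form -/
def HP (a : Fin 12 → ℝ) : R2 :=
  -((2 * (C (a 4) * X 1 - C (a 10) * X 0)) ^ 2
    - 4 * (C (a 3) * X 1 - C (a 9) * X 0) * (C (a 5) * X 1 - C (a 11) * X 0))
/-- the comitant `L = 2K - 4H - M` as a binary form -/
def LP (a : Fin 12 → ℝ) : R2 := 2 * KP a - 4 * HP a - MP a
/-- the comitant `K₁ = p₁q₂ - p₂q₁` as a binary form -/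
def K1P (a : Fin 12 → ℝ) : R2 := p1P a * q2P a - p2P a * q1P a
/-- the invariant `D₁ = a10 + b01` -/
def D1v (a : Fin 12 → ℝ) : ℝ := a 1 + a 8
/-- the comitant `D₂ = ∂p₂/∂x + ∂q₂/∂y` -/
def D2P (a : Fin 12 → ℝ) : R2 := pdx (p2P a) + pdy (q2P a)
/-- `J₁ = Jacob(C₀, D₂)` -/
def J1P (a : Fin 12 → ℝ) : R2 := jacobP (C0P a) (D2P a)
/-- `J₂ = Jacob(C₀, C₂)` -/
def J2P (a : Fin 12 → ℝ) : R2 := jacobP (C0P a) (C2P a)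
/-- `J₃ = Discrim(C₁)`: for `C₁ = -b10·x² + (a10-b01)·xy + a01·y²` this is `B² - 4AC` -/
def J3v (a : Fin 12 → ℝ) : ℝ := (a 1 - a 8) ^ 2 + 4 * a 7 * a 2
/-- `J₄ = Jacob(C₁, D₂)` -/
def J4P (a : Fin 12 → ℝ) : R2 := jacobP (C1P a) (D2P a)
/-- the invariant `κ = (M,K)⁽²⁾` (a constant binary form) -/
def kappaP (a : Fin 12 → ℝ) : R2 := transv2 (MP a) (KP a)
/-- the invariant `κ₁ = (M,C₁)⁽²⁾` (a constant binary form) -/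
def kappa1P (a : Fin 12 → ℝ) : R2 := transv2 (MP a) (C1P a)
/-- the invariant `κ₂ = -J₁` -/
def kappa2f (a : Fin 12 → ℝ) : ℝ :=
  -((-(a 6)) * (2 * a 4 + 2 * a 11) - a 0 * (2 * a 3 + 2 * a 10))
/-- `ζ = M - 2K` -/
def zetaP (a : Fin 12 → ℝ) : R2 := MP a - 2 * KP a
/-- the comitant `K₂ = 4·Jacob(J₂,ζ) + 3·Jacob(C₁,ζ)·D₁ - ζ·(16J₁ + 3J₃ + 3D₁²)` -/
def K2P (a : Fin 12 → ℝ) : R2 :=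
  4 * jacobP (J2P a) (zetaP a) + C (3 * D1v a) * jacobP (C1P a) (zetaP a)
    - zetaP a * (16 * J1P a + C (3 * J3v a + 3 * (D1v a) ^ 2))
/-- the comitant `K₃ = 2C₂²(2J₁-3J₃) + C₂(3C₀K - 2C₁J₄) + 2K₁(C₁D₂ + 3K₁)` -/
def K3P (a : Fin 12 → ℝ) : R2 :=
  2 * (C2P a) ^ 2 * (2 * J1P a - C (3 * J3v a))
    + C2P a * (3 * C0P a * KP a - 2 * C1P a * J4P a)
    + 2 * K1P a * (C1P a * D2P a + 3 * K1P a)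

/-- polynomials in the 12 coefficient variables (indices 0–11) and `x = X 12`, `y = X 13` -/
abbrev R14 := MvPolynomial (Fin 14) ℝ

/-- the differential operator `L₁` -/
def L1op (f : R14) : R14 :=
  2 * X 0 * pderiv 1 f + X 1 * pderiv 3 f + C (1/2 : ℝ) * X 2 * pderiv 4 f
    + 2 * X 6 * pderiv 7 f + X 7 * pderiv 9 f + C (1/2 : ℝ) * X 8 * pderiv 10 f
/-- the differential operator `L₂` -/
def L2op (f : R14) : R14 :=
  2 * X 0 * pderiv 2 f + X 2 * pderiv 5 f + C (1/2 : ℝ) * X 1 * pderiv 4 f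
    + 2 * X 6 * pderiv 8 f + X 8 * pderiv 11 f + C (1/2 : ℝ) * X 7 * pderiv 10 f
/-- the differential operator `𝓛 = x·L₂ - y·L₁` -/
def LLop (f : R14) : R14 := X 12 * L2op f - X 13 * L1op f

/-- `μ₀` as an element of `ℝ[a₀₀,…,b₀₂,x,y]` -/
def mu0P : R14 :=
  (X 3 * X 11 - X 5 * X 9) ^ 2 - 4 * (X 3 * X 10 - X 4 * X 9) * (X 4 * X 11 - X 5 * X 10)

/-- `μᵢ = 𝓛⁽ⁱ⁾(μ₀)/i!` -/
def muP (i : ℕ) : R14 := ((i.factorial : ℝ)⁻¹) • (LLop^[i] mu0P)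

/-- evaluation point assigning the coefficients `a` and the values `x`, `y` -/
def evalAt (a : Fin 12 → ℝ) (x y : ℝ) : Fin 14 → ℝ := fun i =>
  if h : (i : ℕ) < 12 then a ⟨(i : ℕ), h⟩ else if (i : ℕ) = 12 then x else y

/-- the value `μᵢ(a, x, y)` -/
def muf (i : ℕ) (a : Fin 12 → ℝ) (x y : ℝ) : ℝ := eval (evalAt a x y) (muP i)

/-- complex evaluation point: coefficients `a` (cast to `ℂ`) and complex values `x`, `y` -/
def evalAtC (a : Fin 12 → ℝ) (x y : ℂ) : Fin 14 → ℂ := fun i =>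
  if h : (i : ℕ) < 12 then ((a ⟨(i : ℕ), h⟩ : ℝ) : ℂ) else if (i : ℕ) = 12 then x else y

/-- the value of `μᵢ` extended to complex arguments -/
def mufC (i : ℕ) (a : Fin 12 → ℝ) (x y : ℂ) : ℂ := aeval (evalAtC a x y) (muP i)

/-- the homogenization `P(X,Y,Z) = Z²·p(X/Z,Y/Z)` over `ℂ` -/
def PfC (a : Fin 12 → ℝ) (Xv Yv Zv : ℂ) : ℂ :=
  (a 0 : ℂ) * Zv ^ 2 + ((a 1 : ℂ) * Xv + (a 2 : ℂ) * Yv) * Zv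
    + ((a 3 : ℂ) * Xv ^ 2 + 2 * (a 4 : ℂ) * Xv * Yv + (a 5 : ℂ) * Yv ^ 2)
/-- the homogenization `Q(X,Y,Z) = Z²·q(X/Z,Y/Z)` over `ℂ` -/
def QfC (a : Fin 12 → ℝ) (Xv Yv Zv : ℂ) : ℂ :=
  (a 6 : ℂ) * Zv ^ 2 + ((a 7 : ℂ) * Xv + (a 8 : ℂ) * Yv) * Zv
    + ((a 9 : ℂ) * Xv ^ 2 + 2 * (a 10 : ℂ) * Xv * Yv + (a 11 : ℂ) * Yv ^ 2)

/-- `b` is the coefficient vector `r_g(a)` of the system transformed by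
`g ∈ GL(2,ℝ)` with matrix `m` and inverse matrix `n`:
`(p̃,q̃)(x̃,ỹ) = m·(p,q)(g⁻¹(x̃,ỹ))`. -/
def IsTransformed (m n : Matrix (Fin 2) (Fin 2) ℝ) (a b : Fin 12 → ℝ) : Prop :=
  m * n = 1 ∧ ∀ x y : ℝ,
    pf b x y = m 0 0 * pf a (n 0 0 * x + n 0 1 * y) (n 1 0 * x + n 1 1 * y)
               + m 0 1 * qf a (n 0 0 * x + n 0 1 * y) (n 1 0 * x + n 1 1 * y)
    ∧ qf b x y = m 1 0 * pf a (n 0 0 * x + n 0 1 * y) (n 1 0 * x + n 1 1 * y)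
               + m 1 1 * qf a (n 0 0 * x + n 0 1 * y) (n 1 0 * x + n 1 1 * y)

/-- `(P2, Q2)` is the pair of degree-2 homogeneous parts of the system transformed by
`g ∈ GL(2,ℝ)` with matrix `m` and inverse matrix `n`. -/
def Quad2Transformed (m n : Matrix (Fin 2) (Fin 2) ℝ) (a : Fin 12 → ℝ)
    (P2 Q2 : ℝ → ℝ → ℝ) : Prop :=
  m * n = 1 ∧ ∀ x y : ℝ,
    P2 x y = m 0 0 * p2f a (n 0 0 * x + n 0 1 * y) (n 1 0 * x + n 1 1 * y)
               + m 0 1 * q2f a (n 0 0 * x + n 0 1 * y) (n 1 0 * x + n 1 1 * y)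
    ∧ Q2 x y = m 1 0 * p2f a (n 0 0 * x + n 0 1 * y) (n 1 0 * x + n 1 1 * y)
               + m 1 1 * q2f a (n 0 0 * x + n 0 1 * y) (n 1 0 * x + n 1 1 * y)

/-- For a quadratic system with `(p₂,q₂) ≠ (0,0)`, the gcd of `p₂` and `q₂`
in `ℂ[x,y]` is the square `(b·x+c·y)²` of a linear form iff `μ₀(a) = 0`, `K ≡ 0` and `H ≡ 0`. -/
private lemma univ_decomp (b c A B D : ℂ) (hb : b ≠ 0) (u : Polynomial ℂ)
    (h : Polynomial.C A * Polynomial.X ^ 2 + Polynomial.C B * Polynomial.X + Polynomial.C D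
        = (Polynomial.C b * Polynomial.X + Polynomial.C c) ^ 2 * u) :
    ∃ l : ℂ, A = l * b ^ 2 ∧ B = 2 * (l * (b * c)) ∧ D = l * c ^ 2 := by
  have hu : ∃ l : ℂ, u = Polynomial.C l := by
    rcases eq_or_ne u 0 with h0 | h0
    · exact ⟨0, by simp [h0]⟩
    · have hL : (Polynomial.C b * Polynomial.X + Polynomial.C c).natDegree = 1 :=
        Polynomial.natDegree_linear hb
      have hL2 : ((Polynomial.C b * Polynomial.X + Polynomial.C c) ^ 2).natDegree = 2 := by
        rw [Polynomial.natDegree_pow, hL]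
      have hne : (Polynomial.C b * Polynomial.X + Polynomial.C c) ^ 2 ≠ 0 := by
        intro hz
        rw [hz] at hL2
        simp at hL2
      have hdeg := congrArg Polynomial.natDegree h
      rw [Polynomial.natDegree_mul hne h0, hL2] at hdeg
      have hle : (Polynomial.C A * Polynomial.X ^ 2 + Polynomial.C B * Polynomial.X
          + Polynomial.C D).natDegree ≤ 2 := Polynomial.natDegree_quadratic_le
      have hz : u.natDegree = 0 := by omega
      exact ⟨u.coeff 0, Polynomial.eq_C_of_natDegree_eq_zero hz⟩
  obtain ⟨l, rfl⟩ := hu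
  have e0 := congrArg (Polynomial.eval 0) h
  have e1 := congrArg (Polynomial.eval 1) h
  have e2 := congrArg (Polynomial.eval (-1)) h
  simp only [Polynomial.eval_add, Polynomial.eval_mul, Polynomial.eval_pow, Polynomial.eval_C,
    Polynomial.eval_X] at e0 e1 e2
  exact ⟨l, by linear_combination e1 / 2 + e2 / 2 - e0, by linear_combination e1 / 2 - e2 / 2,
    by linear_combination e0⟩

private lemma quad_dvd_decomp (b c A B D : ℂ) (hbc : ¬(b = 0 ∧ c = 0))
    (hdvd : (C b * X 0 + C c * X 1) ^ 2 ∣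
      (C A * X 0 ^ 2 + C B * X 0 * X 1 + C D * X 1 ^ 2 : MvPolynomial (Fin 2) ℂ)) :
    ∃ l : ℂ, A = l * b ^ 2 ∧ B = 2 * (l * (b * c)) ∧ D = l * c ^ 2 := by
  obtain ⟨u, hu⟩ := hdvd
  rcases eq_or_ne b 0 with hb | hb
  · have hc : c ≠ 0 := fun hc => hbc ⟨hb, hc⟩
    have h := congrArg (aeval (![1, Polynomial.X] : Fin 2 → Polynomial ℂ)) hu
    simp only [map_add, map_mul, map_pow, aeval_X, aeval_C, Polynomial.algebraMap_eq,
      Matrix.cons_val_zero, Matrix.cons_val_one, Matrix.head_cons] at h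
    obtain ⟨l, h1, h2, h3⟩ := univ_decomp c b D B A hc (aeval (![1, Polynomial.X] : Fin 2 → Polynomial ℂ) u) (by linear_combination h)
    exact ⟨l, by linear_combination h3, by linear_combination h2, by linear_combination h1⟩
  · have h := congrArg (aeval (![Polynomial.X, 1] : Fin 2 → Polynomial ℂ)) hu
    simp only [map_add, map_mul, map_pow, aeval_X, aeval_C, Polynomial.algebraMap_eq,
      Matrix.cons_val_zero, Matrix.cons_val_one, Matrix.head_cons] at h
    obtain ⟨l, h1, h2, h3⟩ := univ_decomp b c A B D hb (aeval (![Polynomial.X, 1] : Fin 2 → Polynomial ℂ) u) (by linear_combination h)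
    exact ⟨l, h1, h2, h3⟩

private lemma build_eq (A B D b c l : ℂ) (e1 : A = l * b ^ 2) (e2 : B = l * (b * c))
    (e3 : D = l * c ^ 2) :
    (C A * X 0 ^ 2 + C (2 * B) * X 0 * X 1 + C D * X 1 ^ 2 : MvPolynomial (Fin 2) ℂ)
      = C l * (C b * X 0 + C c * X 1) ^ 2 := by
  subst e1 e2 e3
  simp only [map_mul, map_pow, map_ofNat]
  ring

private lemma isGcd_aux (b c l m : ℂ) (hlm : ¬(l = 0 ∧ m = 0)) :
    IsGcdOf ((C b * X 0 + C c * X 1) ^ 2)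
      (C l * (C b * X 0 + C c * X 1) ^ 2) (C m * (C b * X 0 + C c * X 1) ^ 2) := by
  refine ⟨⟨C l, mul_comm _ _⟩, ⟨C m, mul_comm _ _⟩, fun e hel hem => ?_⟩
  rcases eq_or_ne l 0 with hl | hl
  · have hm : m ≠ 0 := fun hm => hlm ⟨hl, hm⟩
    have : C m⁻¹ * (C m * (C b * X 0 + C c * X 1) ^ 2)
        = ((C b * X 0 + C c * X 1) ^ 2 : MvPolynomial (Fin 2) ℂ) := by
      rw [← mul_assoc, ← map_mul, inv_mul_cancel₀ hm, map_one, one_mul]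
    exact this ▸ hem.mul_left _
  · have : C l⁻¹ * (C l * (C b * X 0 + C c * X 1) ^ 2)
        = ((C b * X 0 + C c * X 1) ^ 2 : MvPolynomial (Fin 2) ℂ) := by
      rw [← mul_assoc, ← map_mul, inv_mul_cancel₀ hl, map_one, one_mul]
    exact this ▸ hel.mul_left _

private lemma p2C_shape (a : Fin 12 → ℝ) : p2C a
    = C ((a 3 : ℝ) : ℂ) * X 0 ^ 2 + C (2 * ((a 4 : ℝ) : ℂ)) * X 0 * X 1
      + C ((a 5 : ℝ) : ℂ) * X 1 ^ 2 := rfl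

private lemma q2C_shape (a : Fin 12 → ℝ) : q2C a
    = C ((a 9 : ℝ) : ℂ) * X 0 ^ 2 + C (2 * ((a 10 : ℝ) : ℂ)) * X 0 * X 1
      + C ((a 11 : ℝ) : ℂ) * X 1 ^ 2 := rfl

theorem gcd_square_linear_iff (a : Fin 12 → ℝ) (h : ¬(p2C a = 0 ∧ q2C a = 0)) :
    (∃ b c : ℂ, ¬(b = 0 ∧ c = 0) ∧
        IsGcdOf ((C b * X 0 + C c * X 1) ^ 2) (p2C a) (q2C a)) ↔
      (mu0f a = 0 ∧ (∀ x y : ℝ, Kf a x y = 0) ∧ ∀ x y : ℝ, Hf a x y = 0) := by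
  constructor
  · rintro ⟨b, c, hbc, hdp, hdq, -⟩
    rw [p2C_shape] at hdp
    rw [q2C_shape] at hdq
    obtain ⟨l, e3, e4, e5⟩ := quad_dvd_decomp b c _ _ _ hbc hdp
    obtain ⟨m, f9, f10, f11⟩ := quad_dvd_decomp b c _ _ _ hbc hdq
    have e4' : ((a 4 : ℝ) : ℂ) = l * (b * c) := by linear_combination e4 / 2
    have f10' : ((a 10 : ℝ) : ℂ) = m * (b * c) := by linear_combination f10 / 2
    refine ⟨?_, fun x y => ?_, fun x y => ?_⟩
    · have : ((mu0f a : ℝ) : ℂ) = 0 := by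
        unfold mu0f
        push_cast
        rw [e3, e4', e5, f9, f10', f11]
        ring
      exact_mod_cast this
    · have : ((Kf a x y : ℝ) : ℂ) = 0 := by
        unfold Kf
        push_cast
        rw [e3, e4', e5, f9, f10', f11]
        ring
      exact_mod_cast this
    · have : ((Hf a x y : ℝ) : ℂ) = 0 := by
        unfold Hf
        push_cast
        rw [e3, e4', e5, f9, f10', f11]
        ring
      exact_mod_cast this
  · rintro ⟨-, hK, hH⟩
    have k1 := hK 1 0
    have k2 := hK 0 1
    have k3 := hK 1 1
    have h1 := hH 1 0
    have h2 := hH 0 1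
    unfold Kf at k1 k2 k3
    unfold Hf at h1 h2
    have m1 : a 3 * a 10 = a 4 * a 9 := by linear_combination k1 / 4
    have m3 : a 4 * a 11 = a 5 * a 10 := by linear_combination k2 / 4
    have m2 : a 3 * a 11 = a 5 * a 9 := by linear_combination k3 / 4 - k1 / 4 - k2 / 4
    have d2 : a 10 ^ 2 = a 9 * a 11 := by linear_combination - h1 / 4
    have d1 : a 4 ^ 2 = a 3 * a 5 := by linear_combination - h2 / 4
    -- helper to conclude
    have finish : ∀ b c l m : ℂ, ¬(b = 0 ∧ c = 0) → ¬(l = 0 ∧ m = 0) →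
        ((a 3 : ℝ) : ℂ) = l * b ^ 2 → ((a 4 : ℝ) : ℂ) = l * (b * c) →
        ((a 5 : ℝ) : ℂ) = l * c ^ 2 → ((a 9 : ℝ) : ℂ) = m * b ^ 2 →
        ((a 10 : ℝ) : ℂ) = m * (b * c) → ((a 11 : ℝ) : ℂ) = m * c ^ 2 →
        (∃ b c : ℂ, ¬(b = 0 ∧ c = 0) ∧
          IsGcdOf ((C b * X 0 + C c * X 1) ^ 2) (p2C a) (q2C a)) := by
      intro b c l m hbc hlm g3 g4 g5 g9 g10 g11
      refine ⟨b, c, hbc, ?_⟩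
      have hp : p2C a = C l * (C b * X 0 + C c * X 1) ^ 2 := by
        rw [p2C_shape]; exact build_eq _ _ _ _ _ _ g3 g4 g5
      have hq : q2C a = C m * (C b * X 0 + C c * X 1) ^ 2 := by
        rw [q2C_shape]; exact build_eq _ _ _ _ _ _ g9 g10 g11
      rw [hp, hq]
      exact isGcd_aux b c l m hlm
    rcases eq_or_ne (a 3) 0 with h3 | h3
    · have h4 : a 4 = 0 := by
        have : a 4 ^ 2 = 0 := by rw [d1, h3]; ring
        exact pow_eq_zero_iff (two_ne_zero) |>.mp this
      rcases eq_or_ne (a 5) 0 with h5 | h5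
      · -- p2 = 0; use q2 side
        have hp0 : p2C a = 0 := by
          rw [p2C_shape, h3, h4, h5]; simp
        rcases eq_or_ne (a 9) 0 with h9 | h9
        · have h10 : a 10 = 0 := by
            have : a 10 ^ 2 = 0 := by rw [d2, h9]; ring
            exact pow_eq_zero_iff (two_ne_zero) |>.mp this
          have h11 : a 11 ≠ 0 := by
            intro h11
            exact h ⟨hp0, by rw [q2C_shape, h9, h10, h11]; simp⟩
          refine finish 0 ((a 11 : ℝ) : ℂ) 0 (((a 11 : ℝ) : ℂ))⁻¹ ?_ ?_ ?_ ?_ ?_ ?_ ?_ ?_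
          · rintro ⟨-, hc⟩; exact h11 (by exact_mod_cast hc)
          · rintro ⟨-, hm⟩; exact h11 (by simpa using hm)
          · rw [h3]; push_cast; ring
          · rw [h4]; push_cast; ring
          · rw [h5]; push_cast; ring
          · rw [h9]; push_cast; ring
          · rw [h10]; push_cast; ring
          · have h11' : ((a 11 : ℝ) : ℂ) ≠ 0 := by exact_mod_cast h11
            have hinv : ((a 11 : ℝ) : ℂ) * (((a 11 : ℝ) : ℂ))⁻¹ = 1 := mul_inv_cancel₀ h11'
            linear_combination (-((a 11 : ℝ) : ℂ)) * hinv
        · refine finish ((a 9 : ℝ) : ℂ) ((a 10 : ℝ) : ℂ) 0 (((a 9 : ℝ) : ℂ))⁻¹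
            ?_ ?_ ?_ ?_ ?_ ?_ ?_ ?_
          · rintro ⟨hb, -⟩; exact h9 (by exact_mod_cast hb)
          · rintro ⟨-, hm⟩; exact h9 (by simpa using hm)
          · rw [h3]; push_cast; ring
          · rw [h4]; push_cast; ring
          · rw [h5]; push_cast; ring
          · have h9' : ((a 9 : ℝ) : ℂ) ≠ 0 := by exact_mod_cast h9
            have hinv : ((a 9 : ℝ) : ℂ) * (((a 9 : ℝ) : ℂ))⁻¹ = 1 := mul_inv_cancel₀ h9'
            linear_combination (-((a 9 : ℝ) : ℂ)) * hinv
          · have h9' : ((a 9 : ℝ) : ℂ) ≠ 0 := by exact_mod_cast h9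
            have hinv : ((a 9 : ℝ) : ℂ) * (((a 9 : ℝ) : ℂ))⁻¹ = 1 := mul_inv_cancel₀ h9'
            linear_combination (-((a 10 : ℝ) : ℂ)) * hinv
          · have h9' : ((a 9 : ℝ) : ℂ) ≠ 0 := by exact_mod_cast h9
            have hinv : ((a 9 : ℝ) : ℂ) * (((a 9 : ℝ) : ℂ))⁻¹ = 1 := mul_inv_cancel₀ h9'
            have d2' : ((a 10 : ℝ) : ℂ) ^ 2 = ((a 9 : ℝ) : ℂ) * ((a 11 : ℝ) : ℂ) := by
              exact_mod_cast d2
            linear_combination (-(((a 9 : ℝ) : ℂ))⁻¹) * d2' - ((a 11 : ℝ) : ℂ) * hinv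
      · -- a3 = 0, a5 ≠ 0 : p2 = a5 y^2
        have h9 : a 9 = 0 := by
          rcases mul_eq_zero.mp (show a 5 * a 9 = 0 by
            linear_combination - m2 + a 11 * h3) with h' | h'
          · exact absurd h' h5
          · exact h'
        have h10 : a 10 = 0 := by
          rcases mul_eq_zero.mp (show a 5 * a 10 = 0 by
            linear_combination - m3 + a 11 * h4) with h' | h'
          · exact absurd h' h5
          · exact h'
        have h5' : ((a 5 : ℝ) : ℂ) ≠ 0 := by exact_mod_cast h5
        have hinv : ((a 5 : ℝ) : ℂ) * (((a 5 : ℝ) : ℂ))⁻¹ = 1 := mul_inv_cancel₀ h5'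
        refine finish 0 ((a 5 : ℝ) : ℂ) (((a 5 : ℝ) : ℂ))⁻¹
            (((a 11 : ℝ) : ℂ) * ((((a 5 : ℝ) : ℂ))⁻¹) ^ 2) ?_ ?_ ?_ ?_ ?_ ?_ ?_ ?_
        · rintro ⟨-, hc⟩; exact h5' hc
        · rintro ⟨hl, -⟩; exact h5' (by simpa using hl)
        · rw [h3]; push_cast; ring
        · rw [h4]; push_cast; ring
        · linear_combination (-((a 5 : ℝ) : ℂ)) * hinv
        · rw [h9]; push_cast; ring
        · rw [h10]; push_cast; ring
        · linear_combination (-((a 11 : ℝ) : ℂ) * (((a 5 : ℝ) : ℂ) * (((a 5 : ℝ) : ℂ))⁻¹ + 1)) * hinv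
    · -- a3 ≠ 0
      have h3' : ((a 3 : ℝ) : ℂ) ≠ 0 := by exact_mod_cast h3
      have d1' : ((a 4 : ℝ) : ℂ) ^ 2 = ((a 3 : ℝ) : ℂ) * ((a 5 : ℝ) : ℂ) := by exact_mod_cast d1
      have m1' : ((a 3 : ℝ) : ℂ) * ((a 10 : ℝ) : ℂ) = ((a 4 : ℝ) : ℂ) * ((a 9 : ℝ) : ℂ) := by
        exact_mod_cast m1
      have m2' : ((a 3 : ℝ) : ℂ) * ((a 11 : ℝ) : ℂ) = ((a 5 : ℝ) : ℂ) * ((a 9 : ℝ) : ℂ) := by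
        exact_mod_cast m2
      have hinv : ((a 3 : ℝ) : ℂ) * (((a 3 : ℝ) : ℂ))⁻¹ = 1 := mul_inv_cancel₀ h3'
      refine finish ((a 3 : ℝ) : ℂ) ((a 4 : ℝ) : ℂ) (((a 3 : ℝ) : ℂ))⁻¹
          (((a 9 : ℝ) : ℂ) * ((((a 3 : ℝ) : ℂ))⁻¹) ^ 2) ?_ ?_ ?_ ?_ ?_ ?_ ?_ ?_
      · rintro ⟨hb, -⟩; exact h3' hb
      · rintro ⟨hl, -⟩; exact h3' (by simpa using hl)
      · linear_combination (-((a 3 : ℝ) : ℂ)) * hinv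
      · linear_combination (-((a 4 : ℝ) : ℂ)) * hinv
      · linear_combination (-(((a 3 : ℝ) : ℂ))⁻¹) * d1' - ((a 5 : ℝ) : ℂ) * hinv
      · linear_combination (-((a 9 : ℝ) : ℂ) * (((a 3 : ℝ) : ℂ) * (((a 3 : ℝ) : ℂ))⁻¹ + 1)) * hinv
      · linear_combination ((((a 3 : ℝ) : ℂ))⁻¹) * m1'
          - (((a 10 : ℝ) : ℂ) + ((a 4 : ℝ) : ℂ) * ((a 9 : ℝ) : ℂ) * (((a 3 : ℝ) : ℂ))⁻¹) * hinv
      · linear_combination (-((a 9 : ℝ) : ℂ) * ((((a 3 : ℝ) : ℂ))⁻¹) ^ 2) * d1'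
          + ((((a 3 : ℝ) : ℂ))⁻¹) * m2'
          - (((a 5 : ℝ) : ℂ) * ((a 9 : ℝ) : ℂ) * (((a 3 : ℝ) : ℂ))⁻¹ + ((a 11 : ℝ) : ℂ)) * hinv


end QSinf
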